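/- Every vertex splittable monomial ideal has linear quotients. -/

import Mathlib

open MvPolynomial

namespace Paper

abbrev R (K : Type) [Field K] (n : ℕ) := MvPolynomial (Fin n) K

noncomputable def mon (K : Type) [Field K] {n : ℕ} (a : Fin n →₀ ℕ) : R K n :=
  monomial a 1

def mdeg {n : ℕ} (a : Fin n →₀ ℕ) : ℕ := a.sum fun _ e => e

def IsSqfree {n : ℕ} (a : Fin n →₀ ℕ) : Prop := ∀ i, a i ≤ 1

variable {K : Type} [Field K] {n : ℕ}

/-- A monomial ideal: an ideal generated by a set of monomials. -/
def IsMonomialIdeal (I : Ideal (R K n)) : Prop :=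
  ∃ S : Set (Fin n →₀ ℕ), I = Ideal.span ((mon K) '' S)

/-- The (exponent vectors of the) minimal monomial generators `G(I)` of a monomial
ideal: monomials in `I` such that no proper divisor lies in `I`. -/
def minGens (I : Ideal (R K n)) : Set (Fin n →₀ ℕ) :=
  { a | mon K a ∈ I ∧ ∀ (b : Fin n →₀ ℕ) (i : Fin n),
      a = b + Finsupp.single i 1 → mon K b ∉ I }

/-- Polymatroidal: a monomial ideal generated in a single degree satisfying the
exchange property. -/
def IsPolymatroidal (I : Ideal (R K n)) : Prop :=
  IsMonomialIdeal I ∧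
  (∃ d, ∀ a ∈ minGens I, mdeg a = d) ∧
  ∀ u ∈ minGens I, ∀ v ∈ minGens I, ∀ i : Fin n, v i < u i →
    ∃ j : Fin n, u j < v j ∧
      ∃ w ∈ minGens I, w + Finsupp.single i 1 = u + Finsupp.single j 1

/-- Matroidal: squarefree polymatroidal. -/
def IsMatroidal (I : Ideal (R K n)) : Prop :=
  IsPolymatroidal I ∧ ∀ a ∈ minGens I, IsSqfree a

/-- Weakly polymatroidal with respect to the variable ordering
`x_{σ 0} > x_{σ 1} > ... > x_{σ (n-1)}`. -/
def IsWeaklyPolymatroidalWrt (σ : Equiv.Perm (Fin n)) (I : Ideal (R K n)) : Prop :=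
  IsMonomialIdeal I ∧
  ∀ u ∈ minGens I, ∀ v ∈ minGens I, ∀ t : Fin n,
    (∀ s, s < t → u (σ s) = v (σ s)) → v (σ t) < u (σ t) →
    ∃ j : Fin n, t < j ∧
      ∃ w : Fin n →₀ ℕ,
        w + Finsupp.single (σ j) 1 = v + Finsupp.single (σ t) 1 ∧ mon K w ∈ I

/-- Weakly polymatroidal with respect to the standard ordering `x_1 > ... > x_n`. -/
def IsWeaklyPolymatroidal (I : Ideal (R K n)) : Prop :=
  IsWeaklyPolymatroidalWrt (Equiv.refl (Fin n)) I

/-- Vertex splittable monomial ideals (Moradi–Khosh-Ahang). Ideals of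
`K[V \ {x}]` are encoded as ideals of `R` whose minimal generators do not
involve the variable `x`. -/
inductive VertexSplittable : Ideal (R K n) → Prop
  | principal (a : Fin n →₀ ℕ) : VertexSplittable (Ideal.span {mon K a})
  | bot : VertexSplittable ⊥
  | top : VertexSplittable ⊤
  | split (x : Fin n) (I₁ I₂ : Ideal (R K n)) :
      VertexSplittable I₁ → VertexSplittable I₂ →
      (∀ a ∈ minGens I₁, a x = 0) → (∀ a ∈ minGens I₂, a x = 0) →
      I₂ ≤ I₁ →
      minGens (Ideal.span {(X x : R K n)} * I₁ + I₂)
        = minGens (Ideal.span {(X x : R K n)} * I₁) ∪ minGens I₂ →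
      minGens (Ideal.span {(X x : R K n)} * I₁) ∩ minGens I₂ = ∅ →
      VertexSplittable (Ideal.span {(X x : R K n)} * I₁ + I₂)

/-- Linear quotients: some ordering of the minimal monomial generators such that
each successive colon ideal is generated by a subset of the variables. -/
def HasLinearQuotients (I : Ideal (R K n)) : Prop :=
  IsMonomialIdeal I ∧
  ∃ L : List (Fin n →₀ ℕ), L.Nodup ∧ {a | a ∈ L} = minGens I ∧
    ∀ (j : ℕ) (hj : j < L.length), 0 < j →
      ∃ S : Set (Fin n),
        Submodule.colon (Ideal.span ((mon K) '' {a | a ∈ L.take j}))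
            (Ideal.span {mon K (L.get ⟨j, hj⟩)})
          = Ideal.span ((fun i => (X i : R K n)) '' S)


/-- A (possibly void) abstract simplicial complex on the vertex set `Fin n`. -/
structure SComplex (n : ℕ) where
  faces : Finset (Finset (Fin n))
  down : ∀ F ∈ faces, ∀ G ⊆ F, G ∈ faces

variable {n : ℕ}

def SComplex.IsFacet (Δ : SComplex n) (F : Finset (Fin n)) : Prop :=
  F ∈ Δ.faces ∧ ∀ G ∈ Δ.faces, F ⊆ G → G = F

/-- Deletion of a vertex. -/
def SComplex.del (Δ : SComplex n) (x : Fin n) : SComplex n where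
  faces := Δ.faces.filter (fun F => x ∉ F)
  down := by
    intro F hF G hG
    simp only [Finset.mem_filter] at *
    exact ⟨Δ.down F hF.1 G hG, fun hx => hF.2 (hG hx)⟩

/-- Link of a vertex. -/
def SComplex.lk (Δ : SComplex n) (x : Fin n) : SComplex n where
  faces := Δ.faces.filter (fun F => x ∉ F ∧ insert x F ∈ Δ.faces)
  down := by
    intro F hF G hG
    simp only [Finset.mem_filter] at *
    refine ⟨Δ.down F hF.1 G hG, fun hx => hF.2.1 (hG hx), ?_⟩
    exact Δ.down _ hF.2.2 _ (Finset.insert_subset_insert x hG)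

/-- Vertex decomposability, defined recursively via shedding vertices. -/
inductive VertexDecomposable : SComplex n → Prop
  | simplex (Δ : SComplex n) (F : Finset (Fin n)) :
      Δ.faces = F.powerset → VertexDecomposable Δ
  | shed (Δ : SComplex n) (x : Fin n) :
      VertexDecomposable (Δ.del x) → VertexDecomposable (Δ.lk x) →
      (∀ F ∈ (Δ.lk x).faces, ¬ (Δ.del x).IsFacet F) →
      VertexDecomposable Δ

/-- Shellability (non-pure, Björner–Wachs). -/
def SComplex.Shellable (Δ : SComplex n) : Prop :=
  ∃ L : List (Finset (Fin n)), L.Nodup ∧ {F | F ∈ L} = {F | Δ.IsFacet F} ∧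
    ∀ (i j : ℕ) (hi : i < L.length) (hj : j < L.length), i < j →
      ∃ x ∈ L.get ⟨j, hj⟩ \ L.get ⟨i, hi⟩,
        ∃ (l : ℕ) (hl : l < j),
          L.get ⟨j, hj⟩ \ L.get ⟨l, Nat.lt_trans hl hj⟩ = {x}

/-- The Alexander dual complex `Δ^∨ = { V \ A : A ∉ Δ }`. -/
noncomputable def SComplex.dual (Δ : SComplex n) : SComplex n where
  faces := Finset.univ.filter (fun B => Bᶜ ∉ Δ.faces)
  down := by
    classical
    intro F hF G hG
    simp only [Finset.mem_filter, Finset.mem_univ, true_and] at *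
    intro hGc
    exact hF (Δ.down _ hGc _ (Finset.compl_subset_compl.2 hG))


/-- The squarefree exponent vector of a set of vertices. -/
noncomputable def sqmon {n : ℕ} (F : Finset (Fin n)) : Fin n →₀ ℕ :=
  ∑ i ∈ F, Finsupp.single i 1

/-- The Stanley–Reisner ideal of `Δ`. -/
noncomputable def srIdeal (K : Type) [Field K] {n : ℕ} (Δ : SComplex n) :
    Ideal (MvPolynomial (Fin n) K) :=
  Ideal.span ((fun F => mon K (sqmon F)) '' {F | F ∉ Δ.faces})


section CM
variable (A : Type) [CommRing A]

/-- Krull dimension of a module: the dimension of `A / ann M`. -/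
noncomputable def moduleDim (M : Type) [AddCommGroup M] [Module A M] : WithBot ℕ∞ :=
  ringKrullDim (A ⧸ Submodule.annihilator (⊤ : Submodule A M))

/-- `rs` is an `M`-regular sequence: each entry is a nonzerodivisor on the quotient
of `M` by the previous entries. -/
def IsRegSeq (M : Type) [AddCommGroup M] [Module A M] (rs : List A) : Prop :=
  ∀ (i : ℕ) (hi : i < rs.length),
    ∀ m : M ⧸ (Ideal.span {r | r ∈ rs.take i} • (⊤ : Submodule A M)),
      rs.get ⟨i, hi⟩ • m = 0 → m = 0

/-- Depth of `M` with respect to the ideal `J`: the supremum of lengths of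
`M`-regular sequences contained in `J`. -/
noncomputable def moduleDepth (J : Ideal A) (M : Type) [AddCommGroup M] [Module A M] : ℕ :=
  sSup {k | ∃ rs : List A, rs.length = k ∧ (∀ r ∈ rs, r ∈ J) ∧ IsRegSeq A M rs}

/-- Cohen–Macaulay module (with respect to the ideal `J` playing the role of the
maximal ideal): zero, or depth equals Krull dimension. -/
def IsCMmod (J : Ideal A) (M : Type) [AddCommGroup M] [Module A M] : Prop :=
  Subsingleton M ∨ moduleDim A M = ((moduleDepth A J M : ℕ∞) : WithBot ℕ∞)

/-- Sequentially Cohen–Macaulay module: a filtration `0 = M₀ ⊂ ... ⊂ M_r = N` with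
Cohen–Macaulay quotients of strictly increasing Krull dimension. -/
def IsSeqCM (J : Ideal A) (N : Type) [AddCommGroup N] [Module A N] : Prop :=
  ∃ (r : ℕ) (c : Fin (r + 1) → Submodule A N),
    c 0 = ⊥ ∧ c (Fin.last r) = ⊤ ∧
    (∀ i : Fin r, c i.castSucc ≤ c i.succ) ∧
    (∀ i : Fin r,
      IsCMmod A J (↥(c i.succ) ⧸ (Submodule.comap (c i.succ).subtype (c i.castSucc)))) ∧
    (∀ i j : Fin r, i < j →
      moduleDim A (↥(c i.succ) ⧸ (Submodule.comap (c i.succ).subtype (c i.castSucc)))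
        < moduleDim A (↥(c j.succ) ⧸ (Submodule.comap (c j.succ).subtype (c j.castSucc))))

end CM

variable {K : Type} [Field K] {n : ℕ}

/-- The irrelevant maximal ideal `(x_1, ..., x_n)`. -/
noncomputable def maxIdeal (K : Type) [Field K] (n : ℕ) : Ideal (MvPolynomial (Fin n) K) :=
  Ideal.span (Set.range (X : Fin n → MvPolynomial (Fin n) K))

section Res

/-- The differential of a free complex given by a matrix of polynomials. -/
noncomputable def resDiff (β : ℕ → ℕ)
    (Mt : (i : ℕ) → Fin (β (i + 1)) → Fin (β i) → MvPolynomial (Fin n) K) (i : ℕ) :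
    (Fin (β (i + 1)) →₀ MvPolynomial (Fin n) K) →ₗ[MvPolynomial (Fin n) K]
      (Fin (β i) →₀ MvPolynomial (Fin n) K) :=
  Finsupp.lsum (MvPolynomial (Fin n) K) fun j =>
    LinearMap.toSpanSingleton (MvPolynomial (Fin n) K) _
      (∑ k : Fin (β i), Finsupp.single k (Mt i j k))

/-- The augmentation map sending basis elements to the generators `g`. -/
noncomputable def resAug (β₀ : ℕ) (g : Fin β₀ → MvPolynomial (Fin n) K) :
    (Fin β₀ →₀ MvPolynomial (Fin n) K) →ₗ[MvPolynomial (Fin n) K] MvPolynomial (Fin n) K :=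
  Finsupp.lsum (MvPolynomial (Fin n) K) fun j =>
    LinearMap.toSpanSingleton (MvPolynomial (Fin n) K) _ (g j)

/-- A graded free resolution of the ideal `I`, recorded by Betti numbers `β`,
degree shifts `dg`, homogeneous generators `g` of `I`, and matrices `Mt` of
homogeneous entries, which is exact. -/
structure GradedRes (I : Ideal (MvPolynomial (Fin n) K)) where
  β : ℕ → ℕ
  dg : (i : ℕ) → Fin (β i) → ℕ
  g : Fin (β 0) → MvPolynomial (Fin n) K
  hg : ∀ j, (g j).IsHomogeneous (dg 0 j)
  Mt : (i : ℕ) → Fin (β (i + 1)) → Fin (β i) → MvPolynomial (Fin n) K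
  hMt : ∀ i j k, Mt i j k = 0 ∨
    (dg i k ≤ dg (i + 1) j ∧ (Mt i j k).IsHomogeneous (dg (i + 1) j - dg i k))
  hrange : LinearMap.range (resAug (β 0) g) = I
  hexact0 : LinearMap.ker (resAug (β 0) g) = LinearMap.range (resDiff β Mt 0)
  hexact : ∀ i, LinearMap.ker (resDiff β Mt i) = LinearMap.range (resDiff β Mt (i + 1))

/-- Castelnuovo–Mumford regularity, as the infimum over all graded free
resolutions of the maximum of `(shift) - (homological degree)`. -/
noncomputable def reg (I : Ideal (MvPolynomial (Fin n) K)) : ℕ∞ :=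
  sInf { r : ℕ∞ | ∃ Res : GradedRes I,
    ∀ (i : ℕ) (j : Fin (Res.β i)), (Res.dg i j : ℕ∞) ≤ r + i }

/-- `I` has a `d`-linear resolution. -/
def HasLinearRes (I : Ideal (MvPolynomial (Fin n) K)) (d : ℕ) : Prop :=
  ∃ Res : GradedRes I, ∀ (i : ℕ) (j : Fin (Res.β i)), Res.dg i j = d + i

/-- The ideal generated by the degree-`d` elements of `I`. -/
noncomputable def compIdeal (I : Ideal (MvPolynomial (Fin n) K)) (d : ℕ) : Ideal (MvPolynomial (Fin n) K) :=
  Ideal.span { f | f ∈ I ∧ f.IsHomogeneous d }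

/-- Componentwise linear ideal. -/
def ComponentwiseLinear (I : Ideal (MvPolynomial (Fin n) K)) : Prop :=
  ∀ d, compIdeal I d = ⊥ ∨ HasLinearRes (compIdeal I d) d

end Res

lemma mon_mul (a b : Fin n →₀ ℕ) : mon K a * mon K b = mon K (a + b) := by
  simp [mon, monomial_mul]

lemma mon_ne_zero (a : Fin n →₀ ℕ) : mon K a ≠ 0 := by
  simp [mon, monomial_eq_zero]

-- L1 : membership criterion for monomials in monomial ideal
lemma mon_mem_span_iff {S : Set (Fin n →₀ ℕ)} {b : Fin n →₀ ℕ} :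
    mon K b ∈ Ideal.span ((mon K) '' S) ↔ ∃ a ∈ S, a ≤ b := by
  have himg : (mon K (n := n)) '' S = (fun s => monomial s (1 : K)) '' S := rfl
  rw [himg, mem_ideal_span_monomial_image]
  constructor
  · intro h
    exact h b (by simp [mon, support_monomial])
  · rintro ⟨a, ha, hab⟩ xi hxi
    have : xi = b := by
      have := hxi; simp [mon, support_monomial] at this; exact this.symm
    exact ⟨a, ha, this ▸ hab⟩

-- L7 : upward closure
lemma mon_mem_of_le {I : Ideal (R K n)} {c b : Fin n →₀ ℕ} (hc : mon K c ∈ I) (h : c ≤ b) :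
    mon K b ∈ I := by
  have : mon K (b - c) * mon K c = mon K b := by
    rw [mon_mul, tsub_add_cancel_of_le h]
  rw [← this]
  exact Ideal.mul_mem_left _ _ hc

lemma mdeg_add (a b : Fin n →₀ ℕ) : mdeg (a + b) = mdeg a + mdeg b := by
  simp [mdeg, Finsupp.sum_add_index]

-- L2 : descent to minimal generators
lemma exists_minGen_le {I : Ideal (R K n)} {b : Fin n →₀ ℕ} (hb : mon K b ∈ I) :
    ∃ c ∈ minGens I, c ≤ b := by
  obtain ⟨d, hd⟩ : ∃ d, mdeg b = d := ⟨_, rfl⟩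
  induction d using Nat.strong_induction_on generalizing b with
  | _ d IH =>
    by_cases hmin : b ∈ minGens I
    · exact ⟨b, hmin, le_refl b⟩
    · simp only [minGens, Set.mem_setOf_eq, not_and, not_forall] at hmin
      obtain ⟨b', i, hbi, hb'⟩ := hmin hb
      rw [not_not] at hb'
      have hlt : mdeg b' < d := by
        subst hd; rw [hbi, mdeg_add]; simp [mdeg, Finsupp.sum_single_index]
      obtain ⟨c, hc, hcb⟩ := IH (mdeg b') hlt hb' rfl
      exact ⟨c, hc, le_trans hcb (by rw [hbi]; exact le_self_add)⟩

-- L3 : monomial ideal is spanned by its minimal generators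
lemma span_minGens {I : Ideal (R K n)} (hI : IsMonomialIdeal I) :
    I = Ideal.span ((mon K) '' minGens I) := by
  obtain ⟨S, hS⟩ := hI
  apply le_antisymm
  · have h1 : Ideal.span ((mon K) '' S) ≤ Ideal.span ((mon K) '' minGens I) := by
      rw [Ideal.span_le]
      rintro _ ⟨a, haS, rfl⟩
      have haI : mon K a ∈ I := hS ▸ Ideal.subset_span ⟨a, haS, rfl⟩
      obtain ⟨c, hc, hca⟩ := exists_minGen_le haI
      exact mon_mem_span_iff.2 ⟨c, hc, hca⟩
    exact hS ▸ h1
  · rw [Ideal.span_le]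
    rintro _ ⟨a, ha, rfl⟩
    exact ha.1

-- L4
lemma mon_mem_iff {I : Ideal (R K n)} (hI : IsMonomialIdeal I) {b : Fin n →₀ ℕ} :
    mon K b ∈ I ↔ ∃ c ∈ minGens I, c ≤ b := by
  constructor
  · exact exists_minGen_le
  · rintro ⟨c, hc, hcb⟩; exact mon_mem_of_le hc.1 hcb

-- antichain
lemma minGens_antichain {I : Ideal (R K n)} {c c' : Fin n →₀ ℕ}
    (hc : c ∈ minGens I) (hc' : c' ∈ minGens I) (h : c' ≤ c) : c' = c := by
  by_contra hne
  obtain ⟨i, hi⟩ : ∃ i, c' i < c i := by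
    by_contra hall
    push_neg at hall
    exact hne (le_antisymm h fun i => hall i)
  have hceq : c = (c - Finsupp.single i 1) + Finsupp.single i 1 := by
    rw [tsub_add_cancel_of_le]
    rw [Finsupp.single_le_iff]
    omega
  refine hc.2 _ i hceq (mon_mem_of_le hc'.1 ?_)
  intro j
  rcases eq_or_ne i j with rfl | hij
  · simp [Finsupp.tsub_apply, Finsupp.single_apply]
    omega
  · simp only [Finsupp.tsub_apply, Finsupp.single_apply, if_neg hij]
    simpa using h j

-- support of f * mon u
lemma support_mul_mon (f : R K n) (u : Fin n →₀ ℕ) :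
    (f * mon K u).support = f.support.map (addRightEmbedding u) :=
  AddMonoidAlgebra.support_coeff_mul_single f _ (by simp) _

-- L5 : colon formula
lemma colon_span_mon (T : Set (Fin n →₀ ℕ)) (u : Fin n →₀ ℕ) :
    Submodule.colon (Ideal.span ((mon K) '' T)) (Ideal.span {mon K u})
      = Ideal.span ((mon K) '' ((fun t => t - u) '' T)) := by
  ext f
  rw [show (Ideal.span {mon K u} : Ideal (R K n)) = Submodule.span (R K n) {mon K u} from rfl,
    Submodule.mem_colon_span_singleton]
  have himg : ∀ (S : Set (Fin n →₀ ℕ)),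
      (mon K (n := n)) '' S = (fun s => monomial s (1 : K)) '' S := fun _ => rfl
  rw [smul_eq_mul, himg, himg, mem_ideal_span_monomial_image,
    mem_ideal_span_monomial_image]
  rw [support_mul_mon]
  simp only [Finset.mem_map, addRightEmbedding_apply]
  constructor
  · intro h m hm
    obtain ⟨t, ht, htm⟩ := h (m + u) ⟨m, hm, rfl⟩
    refine ⟨t - u, ⟨t, ht, rfl⟩, ?_⟩
    rwa [tsub_le_iff_right]
  · rintro h _ ⟨m, hm, rfl⟩
    obtain ⟨_, ⟨t, ht, rfl⟩, htm⟩ := h m hm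
    refine ⟨t, ht, ?_⟩
    rwa [← tsub_le_iff_right]


-- minGens of span of an antichain
lemma minGens_span_antichain {T : Set (Fin n →₀ ℕ)}
    (hT : ∀ t ∈ T, ∀ t' ∈ T, t' ≤ t → t' = t) :
    minGens (Ideal.span ((mon K) '' T)) = T := by
  ext a
  constructor
  · rintro ⟨hmem, hmin⟩
    obtain ⟨t, ht, hle⟩ := mon_mem_span_iff.1 hmem
    have hat : a = t := by
      by_contra hne
      obtain ⟨i, hi⟩ : ∃ i, t i < a i := by
        by_contra hall
        push_neg at hall
        exact hne (le_antisymm (fun j => hall j) hle)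
      have hab : a = (a - Finsupp.single i 1) + Finsupp.single i 1 := by
        rw [tsub_add_cancel_of_le (Finsupp.single_le_iff.2 (by omega))]
      refine hmin _ i hab (mon_mem_span_iff.2 ⟨t, ht, fun j => ?_⟩)
      rcases eq_or_ne i j with rfl | hij
      · simp [Finsupp.tsub_apply, Finsupp.single_apply]; omega
      · simp only [Finsupp.tsub_apply, Finsupp.single_apply, if_neg hij]
        simpa using hle j
    exact hat ▸ ht
  · intro haT
    refine ⟨mon_mem_span_iff.2 ⟨a, haT, le_refl a⟩, ?_⟩
    rintro b i rfl hb
    obtain ⟨t, ht, hle⟩ := mon_mem_span_iff.1 hb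
    have h1 : t ≤ b + Finsupp.single i 1 := le_trans hle le_self_add
    have h2 : t = b + Finsupp.single i 1 := hT _ haT _ ht h1
    have := DFunLike.congr_fun h2 i
    have h3 := hle i
    simp [Finsupp.add_apply, Finsupp.single_apply] at this h3
    omega

lemma minGens_bot : minGens (⊥ : Ideal (R K n)) = ∅ := by
  ext a
  simp only [minGens, Set.mem_setOf_eq, Ideal.mem_bot, Set.mem_empty_iff_false, iff_false,
    not_and]
  intro h
  exact absurd h (mon_ne_zero a)

lemma mon_zero : mon K (0 : Fin n →₀ ℕ) = 1 := by simp [mon]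

lemma top_eq_span : (⊤ : Ideal (R K n)) = Ideal.span ((mon K) '' {0}) := by
  rw [Set.image_singleton, mon_zero, Ideal.span_singleton_one]

lemma minGens_top : minGens (⊤ : Ideal (R K n)) = {0} := by
  rw [top_eq_span]
  exact minGens_span_antichain (by rintro t rfl t' rfl _; rfl)

lemma span_singleton_mon (a : Fin n →₀ ℕ) :
    Ideal.span {mon K a} = Ideal.span ((mon K) '' {a}) := by rw [Set.image_singleton]

lemma minGens_principal (a : Fin n →₀ ℕ) :
    minGens (Ideal.span {mon K a}) = {a} := by
  rw [span_singleton_mon]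
  exact minGens_span_antichain (by rintro t rfl t' rfl _; rfl)

lemma X_eq_mon (x : Fin n) : (X x : R K n) = mon K (Finsupp.single x 1) := rfl

lemma span_X_mul (x : Fin n) (M : Set (Fin n →₀ ℕ)) :
    Ideal.span {(X x : R K n)} * Ideal.span ((mon K) '' M)
      = Ideal.span ((mon K) '' ((fun a => a + Finsupp.single x 1) '' M)) := by
  rw [Ideal.span_mul_span']
  congr 1
  rw [Set.singleton_mul, ← Set.image_comp, ← Set.image_comp]
  ext f
  simp only [Set.mem_image, Function.comp_apply]
  constructor
  · rintro ⟨a, ha, rfl⟩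
    exact ⟨a, ha, by rw [X_eq_mon, mon_mul, add_comm]⟩
  · rintro ⟨a, ha, rfl⟩
    exact ⟨a, ha, by rw [X_eq_mon, mon_mul, add_comm]⟩

lemma shift_antichain {I : Ideal (R K n)} (x : Fin n) :
    ∀ t ∈ (fun a => a + Finsupp.single x 1) '' minGens I,
      ∀ t' ∈ (fun a => a + Finsupp.single x 1) '' minGens I, t' ≤ t → t' = t := by
  rintro _ ⟨c, hc, rfl⟩ _ ⟨c', hc', rfl⟩ hle
  have : c' ≤ c := fun j => by simpa using hle j
  rw [minGens_antichain hc hc' this]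

lemma minGens_X_mul {I : Ideal (R K n)} (hI : IsMonomialIdeal I) (x : Fin n) :
    minGens (Ideal.span {(X x : R K n)} * I)
      = (fun a => a + Finsupp.single x 1) '' minGens I := by
  conv_lhs => rw [span_minGens hI, span_X_mul]
  exact minGens_span_antichain (shift_antichain x)

/-- Every vertex splittable monomial ideal has linear quotients. -/

theorem stmt1 {K : Type} [Field K] {n : ℕ} (I : Ideal (R K n))
    (h : VertexSplittable I) : HasLinearQuotients I := by
  induction h with
  | principal a =>
    refine ⟨⟨{a}, span_singleton_mon a⟩, [a], List.nodup_singleton a, ?_, ?_⟩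
    · rw [minGens_principal]; ext b; simp
    · intro j hj hj0
      simp only [List.length_singleton] at hj
      omega
  | bot =>
    refine ⟨⟨∅, by simp⟩, [], List.nodup_nil, ?_, ?_⟩
    · rw [minGens_bot]; ext b; simp
    · intro j hj hj0
      simp at hj
  | top =>
    refine ⟨⟨{0}, top_eq_span⟩, [0], List.nodup_singleton 0, ?_, ?_⟩
    · rw [minGens_top]; ext b; simp
    · intro j hj hj0
      simp only [List.length_singleton] at hj
      omega
  | split x I₁ I₂ hv1 hv2 hx1 hx2 hle hunion hdisj IH1 IH2 =>
    clear hv1 hv2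
    obtain ⟨hIm1, L₁, hnd1, hset1, hcol1⟩ := IH1
    obtain ⟨hIm2, L₂, hnd2, hset2, hcol2⟩ := IH2
    have m1 : ∀ a, a ∈ L₁ ↔ a ∈ minGens I₁ := fun a => Set.ext_iff.1 hset1 a
    have m2 : ∀ a, a ∈ L₂ ↔ a ∈ minGens I₂ := fun a => Set.ext_iff.1 hset2 a
    have hmg1 : minGens (Ideal.span {(X x : R K n)} * I₁)
        = (fun a => a + Finsupp.single x 1) '' minGens I₁ := minGens_X_mul hIm1 x
    have hJ1 : Ideal.span {(X x : R K n)} * I₁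
        = Ideal.span ((mon K) '' ((fun a => a + Finsupp.single x 1) '' minGens I₁)) := by
      conv_lhs => rw [span_minGens hIm1]
      rw [span_X_mul]
    have hI2span : I₂ = Ideal.span ((mon K) '' minGens I₂) := span_minGens hIm2
    have hmono : IsMonomialIdeal (Ideal.span {(X x : R K n)} * I₁ + I₂) := by
      refine ⟨(fun a => a + Finsupp.single x 1) '' minGens I₁ ∪ minGens I₂, ?_⟩
      rw [Set.image_union, Ideal.span_union, ← hJ1, ← hI2span, Submodule.add_eq_sup]
    have hlenmap : (L₁.map (fun a => a + Finsupp.single x 1)).length = L₁.length :=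
      List.length_map _
    refine ⟨hmono, L₁.map (fun a => a + Finsupp.single x 1) ++ L₂, ?_, ?_, ?_⟩
    · refine (hnd1.map ?_).append hnd2 ?_
      · exact fun a b hab => by simpa using add_left_injective (Finsupp.single x 1) hab
      · intro a ha1 ha2
        have hA : a ∈ minGens (Ideal.span {(X x : R K n)} * I₁) := by
          rw [hmg1]
          obtain ⟨b, hb, rfl⟩ := List.mem_map.1 ha1
          exact ⟨b, (m1 b).1 hb, rfl⟩
        exact Set.eq_empty_iff_forall_notMem.1 hdisj a ⟨hA, (m2 a).1 ha2⟩
    · rw [hunion, hmg1]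
      ext a
      simp only [Set.mem_setOf_eq, List.mem_append, List.mem_map, Set.mem_union, Set.mem_image]
      constructor
      · rintro (⟨b, hb, rfl⟩ | hA)
        · exact Or.inl ⟨b, (m1 b).1 hb, rfl⟩
        · exact Or.inr ((m2 a).1 hA)
      · rintro (⟨b, hb, rfl⟩ | hA)
        · exact Or.inl ⟨b, (m1 b).2 hb, rfl⟩
        · exact Or.inr ((m2 a).2 hA)
    · intro j hj hj0
      by_cases hlt : j < L₁.length
      · -- Case A : the j-th generator comes from x * I₁
        have hjm : j < (L₁.map (fun a => a + Finsupp.single x 1)).length := by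
          rw [hlenmap]; exact hlt
        have hget : (L₁.map (fun a => a + Finsupp.single x 1) ++ L₂).get ⟨j, hj⟩
            = L₁.get ⟨j, hlt⟩ + Finsupp.single x 1 := by
          rw [List.get_eq_getElem, List.getElem_append_left hjm, List.getElem_map,
            List.get_eq_getElem]
        have htake : (L₁.map (fun a => a + Finsupp.single x 1) ++ L₂).take j
            = (L₁.take j).map (fun a => a + Finsupp.single x 1) := by
          rw [List.take_append_of_le_length (le_of_lt hjm), List.map_take]
        obtain ⟨S, hS⟩ := hcol1 j hlt hj0
        refine ⟨S, ?_⟩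
        rw [hget, htake, ← hS]
        have hsets : {a | a ∈ (L₁.take j).map (fun a => a + Finsupp.single x 1)}
            = (fun a => a + Finsupp.single x 1) '' {a | a ∈ L₁.take j} := by
          ext a
          simp only [Set.mem_setOf_eq, List.mem_map, Set.mem_image]
        rw [hsets, colon_span_mon, colon_span_mon]
        have himgeq : (fun t => t - (L₁.get ⟨j, hlt⟩ + Finsupp.single x 1)) ''
              ((fun a => a + Finsupp.single x 1) '' {a | a ∈ L₁.take j})
            = (fun t => t - L₁.get ⟨j, hlt⟩) '' {a | a ∈ L₁.take j} := by
          rw [Set.image_image]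
          apply Set.image_congr
          intro t _
          ext i
          simp only [Finsupp.tsub_apply, Finsupp.add_apply]
          omega
        rw [himgeq]
      · -- Case B : the j-th generator comes from I₂
        push_neg at hlt
        have hj2 : j - L₁.length < L₂.length := by
          have hh := hj
          rw [List.length_append, hlenmap] at hh
          omega
        have hget : (L₁.map (fun a => a + Finsupp.single x 1) ++ L₂).get ⟨j, hj⟩
            = L₂.get ⟨j - L₁.length, hj2⟩ := by
          rw [List.get_eq_getElem,
            List.getElem_append_right (by rw [hlenmap]; exact hlt),
            List.get_eq_getElem]
          simp [hlenmap]
        have htake : (L₁.map (fun a => a + Finsupp.single x 1) ++ L₂).take j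
            = L₁.map (fun a => a + Finsupp.single x 1) ++ L₂.take (j - L₁.length) := by
          rw [List.take_append,
            List.take_of_length_le (by rw [hlenmap]; exact hlt), hlenmap]
        set u := L₂.get ⟨j - L₁.length, hj2⟩ with hu
        have hu2 : u ∈ minGens I₂ := (m2 u).1 (List.get_mem L₂ ⟨_, hj2⟩)
        have hux : u x = 0 := hx2 u hu2
        have hsets : {a | a ∈ L₁.map (fun a => a + Finsupp.single x 1)
              ++ L₂.take (j - L₁.length)}
            = (fun a => a + Finsupp.single x 1) '' minGens I₁
              ∪ {a | a ∈ L₂.take (j - L₁.length)} := by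
          ext a
          simp only [Set.mem_setOf_eq, List.mem_append, List.mem_map, Set.mem_union,
            Set.mem_image]
          constructor
          · rintro (⟨b, hb, rfl⟩ | hA)
            · exact Or.inl ⟨b, (m1 b).1 hb, rfl⟩
            · exact Or.inr hA
          · rintro (⟨b, hb, rfl⟩ | hA)
            · exact Or.inl ⟨b, (m1 b).2 hb, rfl⟩
            · exact Or.inr hA
        obtain ⟨c₀, hc₀, hc₀u⟩ : ∃ c ∈ minGens I₁, c ≤ u := exists_minGen_le (hle hu2.1)
        obtain ⟨S', hS'⟩ : ∃ S' : Set (Fin n),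
            Ideal.span ((mon K) '' ((fun t => t - u) '' {a | a ∈ L₂.take (j - L₁.length)}))
              = Ideal.span ((fun i => (X i : R K n)) '' S') := by
          rcases Nat.eq_zero_or_pos (j - L₁.length) with h0 | hpos
          · refine ⟨∅, ?_⟩
            have hT : {a | a ∈ L₂.take (j - L₁.length)} = (∅ : Set (Fin n →₀ ℕ)) := by
              ext a; simp [h0]
            rw [hT]
            simp
          · obtain ⟨S', hS'⟩ := hcol2 (j - L₁.length) hj2 hpos
            exact ⟨S', by rw [← hS', colon_span_mon]⟩
        refine ⟨insert x S', ?_⟩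
        rw [hget, htake, hsets, colon_span_mon, Set.image_union, Set.image_union,
          Ideal.span_union]
        have hXx : (mon K (Finsupp.single x 1) : R K n)
            ∈ Ideal.span ((fun i => (X i : R K n)) '' insert x S') :=
          Ideal.subset_span ⟨x, Set.mem_insert x S', (X_eq_mon x).symm⟩
        apply le_antisymm
        · apply sup_le
          · rw [Ideal.span_le]
            rintro _ ⟨_, ⟨_, ⟨c, hc, rfl⟩, rfl⟩, rfl⟩
            have key : (c + Finsupp.single x 1) - u = (c - u) + Finsupp.single x 1 := by
              ext i
              rcases eq_or_ne i x with rfl | hix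
              · simp [Finsupp.tsub_apply, hux]
              · simp only [Finsupp.tsub_apply, Finsupp.add_apply, Finsupp.single_apply]
                rw [if_neg (fun hh => hix hh.symm)]
                omega
            show mon K ((c + Finsupp.single x 1) - u)
                ∈ Ideal.span ((fun i => (X i : R K n)) '' insert x S')
            rw [key, ← mon_mul]
            exact Ideal.mul_mem_left _ _ hXx
          · calc Ideal.span ((mon K) ''
                  ((fun t => t - u) '' {a | a ∈ L₂.take (j - L₁.length)}))
                = Ideal.span ((fun i => (X i : R K n)) '' S') := hS'
              _ ≤ Ideal.span ((fun i => (X i : R K n)) '' insert x S') :=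
                  Ideal.span_mono (Set.image_mono (Set.subset_insert x S'))
        · rw [Ideal.span_le]
          rintro _ ⟨i, hi, rfl⟩
          rcases Set.mem_insert_iff.1 hi with hix | hiS
          · subst hix
            apply Submodule.mem_sup_left
            show (X i : R K n) ∈ _
            rw [X_eq_mon]
            refine mon_mem_span_iff.2
              ⟨(c₀ + Finsupp.single i 1) - u, ⟨c₀ + Finsupp.single i 1, ⟨c₀, hc₀, rfl⟩, rfl⟩, ?_⟩
            intro k
            have hci := hc₀u k
            rcases eq_or_ne k i with rfl | hix
            · simp only [Finsupp.tsub_apply, Finsupp.add_apply, Finsupp.single_apply, if_pos rfl]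
              omega
            · simp only [Finsupp.tsub_apply, Finsupp.add_apply, Finsupp.single_apply,
                if_neg (Ne.symm hix)]
              omega
          · apply Submodule.mem_sup_right
            rw [hS']
            exact Ideal.subset_span ⟨i, hiS, rfl⟩

end Paper
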